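/- arXiv:cs/0411006 — 14 statements merged into one kernel-verified Lean document; each statement's English description precedes it below -/
import Mathlib

section
/- Let d ≥ 0 and k be integers with d+2 ≤ k < ∞, and let λ > 1 be a real number satisfying Σ_{j=d+1}^{k+1} λ^{-j} = 1. Then there is no real p ∈ (0,1) such that simultaneously p^{k-d} = λ^{-(k+1)} and p^{k-d-i}(1-p) = λ^{-(k-i+1)} for every integer i with 1 ≤ i ≤ k-d. (That is, the bit stuffing phrase probability vector v^0 never equals the maxentropic phrase probability vector Λ, so bit stuffing is strictly suboptimal for these constraints.) -/
/-- Bit stuffing is strictly suboptimal for `d+2 ≤ k < ∞`: the bit stuffing phrase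
probability vector never matches the maxentropic phrase probability vector. -/
theorem stmt_0 (d k : ℕ) (hk : d + 2 ≤ k) (lam : ℝ) (hlam : 1 < lam)
    (hroot : ∑ j ∈ Finset.Icc (d + 1) (k + 1), lam⁻¹ ^ j = 1) :
    ¬ ∃ p : ℝ, 0 < p ∧ p < 1 ∧
      p ^ (k - d) = lam⁻¹ ^ (k + 1) ∧
      (∀ i : ℕ, 1 ≤ i → i ≤ k - d →
        p ^ (k - d - i) * (1 - p) = lam⁻¹ ^ (k - i + 1)) := by
  rintro ⟨p, hp0, hp1, hA, hB⟩
  have hm : 2 ≤ k - d := by omega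
  have hinv0 : (0:ℝ) < lam⁻¹ := inv_pos.mpr (lt_trans one_pos hlam)
  have hinv1 : lam⁻¹ < 1 := inv_lt_one_of_one_lt₀ hlam
  have e1 := hB 1 le_rfl (by omega)
  have e2 := hB 2 (by omega) hm
  have h1 : k - d - 1 = (k - d - 2) + 1 := by omega
  have h2 : k - 1 + 1 = k := by omega
  have h3 : k - 2 + 1 = k - 1 := by omega
  rw [h1, h2] at e1
  rw [h3] at e2
  -- e1 : p ^ (k-d-2+1) * (1-p) = lam⁻¹ ^ k
  -- e2 : p ^ (k-d-2) * (1-p) = lam⁻¹ ^ (k-1)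
  have hk1 : k = (k - 1) + 1 := by omega
  have hpinv : p = lam⁻¹ := by
    have : p * (p ^ (k - d - 2) * (1 - p)) = lam⁻¹ * lam⁻¹ ^ (k - 1) := by
      calc p * (p ^ (k - d - 2) * (1 - p)) = p ^ (k - d - 2 + 1) * (1 - p) := by ring
        _ = lam⁻¹ ^ k := e1
        _ = lam⁻¹ * lam⁻¹ ^ (k - 1) := by conv_lhs => rw [hk1]; rw [pow_succ]; ring_nf
    rw [e2] at this
    have hne : lam⁻¹ ^ (k - 1) ≠ 0 := by positivity
    exact mul_right_cancel₀ hne this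
  rw [hpinv] at hA
  have hlt : lam⁻¹ ^ (k + 1) < lam⁻¹ ^ (k - d) :=
    pow_lt_pow_right_of_lt_one₀ hinv0 hinv1 (by omega)
  exact absurd hA (ne_of_gt hlt)
end

section
/- Let d ≥ 1 and k be integers with d+2 ≤ k < ∞. Then the supremum over p ∈ (0,1) of R_1(p,d,k) is strictly greater than the supremum over p ∈ (0,1) of R_0(p,d,k); that is, the maximum average rate of the bit flipping algorithm exceeds the maximum average rate of the bit stuffing algorithm. -/
/-- Binary entropy function. -/
noncomputable def binEnt (p : ℝ) : ℝ := -p * Real.logb 2 p - (1 - p) * Real.logb 2 (1 - p)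

/-- Average information rate of the symbol sliding algorithm SS(j). -/
noncomputable def ssRate (j d k : ℕ) (p : ℝ) : ℝ :=
  binEnt p * (1 - p ^ (k - d)) /
    (1 - p ^ (k - d) + (1 - p) * (p ^ (k - d - j) - (j : ℝ) * p ^ (k - d) + (d : ℝ)))

open Real Set

lemma binEnt_eq (p : ℝ) : binEnt p = Real.binEntropy p / Real.log 2 := by
  unfold binEnt Real.binEntropy Real.logb
  rw [Real.log_inv, Real.log_inv]; ring

lemma binEnt_pos {p : ℝ} (h0 : 0 < p) (h1 : p < 1) : 0 < binEnt p := by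
  rw [binEnt_eq]; exact div_pos (Real.binEntropy_pos h0 h1) (Real.log_pos one_lt_two)

lemma binEnt_le_one (p : ℝ) : binEnt p ≤ 1 := by
  rw [binEnt_eq]
  exact (div_le_one (Real.log_pos one_lt_two)).mpr Real.binEntropy_le_log_two

lemma binEnt_cont : Continuous binEnt := by
  have : binEnt = fun p => Real.binEntropy p / Real.log 2 := funext binEnt_eq
  rw [this]; exact Real.binEntropy_continuous.div_const _

lemma binEnt_zero : binEnt 0 = 0 := by simp [binEnt]
lemma binEnt_one : binEnt 1 = 0 := by simp [binEnt]
lemma binEnt_half : binEnt 2⁻¹ = 1 := by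
  rw [binEnt_eq, Real.binEntropy_two_inv, div_self (Real.log_pos one_lt_two).ne']
lemma binEnt_one_sub (p : ℝ) : binEnt (1 - p) = binEnt p := by
  rw [binEnt_eq, binEnt_eq, Real.binEntropy_one_sub]

lemma pow_sub_pow_le_sub {p q : ℝ} (h0 : 0 ≤ p) (hpq : p ≤ q) (hs : p + q = 1)
    {n : ℕ} (hn : 1 ≤ n) : q ^ n - p ^ n ≤ q - p := by
  induction n, hn using Nat.le_induction with
  | base => simp
  | succ n hn ih =>
    have hq1 : q ≤ 1 := by linarith
    have hpn : p ^ n ≤ p := pow_le_of_le_one h0 (by linarith) (by omega)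
    have hq0 : (0:ℝ) ≤ q := le_trans h0 hpq
    have key : q ^ (n+1) - p ^ (n+1) = q * (q ^ n - p ^ n) + p ^ n * (q - p) := by ring
    rw [key]
    have h1 : q * (q ^ n - p ^ n) ≤ q * (q - p) := mul_le_mul_of_nonneg_left ih hq0
    have h2 : p ^ n * (q - p) ≤ p * (q - p) := mul_le_mul_of_nonneg_right hpn (by linarith)
    nlinarith

/-- clean forms of the two rates -/
noncomputable def R0 (d m : ℕ) (p : ℝ) : ℝ :=
  binEnt p * (1 - p ^ m) / (1 - p ^ m + (1 - p) * (p ^ m + d))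
noncomputable def R1 (d m : ℕ) (p : ℝ) : ℝ :=
  binEnt p * (1 - p ^ m) / (1 - p ^ m + (1 - p) * (p ^ (m - 1) - p ^ m + d))

lemma ssRate_zero_eq (d k : ℕ) (p : ℝ) : ssRate 0 d k p = R0 d (k - d) p := by
  simp [ssRate, R0]

lemma ssRate_one_eq (d k : ℕ) (p : ℝ) : ssRate 1 d k p = R1 d (k - d) p := by
  simp [ssRate, R1]

section base
variable {d m : ℕ} (hd : 1 ≤ d) (hm : 2 ≤ m)

include hm in
lemma den0_pos {p : ℝ} (h0 : 0 ≤ p) (h1 : p < 1) :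
    0 < 1 - p ^ m + (1 - p) * (p ^ m + d) := by
  have h2 : p ^ m < 1 := pow_lt_one₀ h0 h1 (by omega)
  have h3 : (0:ℝ) ≤ p ^ m := pow_nonneg h0 m
  have h4 : (0:ℝ) ≤ d := Nat.cast_nonneg d
  nlinarith

include hm in
lemma den1_pos {p : ℝ} (h0 : 0 ≤ p) (h1 : p < 1) :
    0 < 1 - p ^ m + (1 - p) * (p ^ (m - 1) - p ^ m + d) := by
  have h2 : p ^ m < 1 := pow_lt_one₀ h0 h1 (by omega)
  have h5 : p ^ m ≤ p ^ (m - 1) := pow_le_pow_of_le_one h0 (le_of_lt h1) (by omega)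
  have h4 : (0:ℝ) ≤ d := Nat.cast_nonneg d
  nlinarith

include hm in
lemma R0_le_binEnt {p : ℝ} (h0 : 0 < p) (h1 : p < 1) : R0 d m p ≤ binEnt p := by
  have hD := den0_pos (d := d) hm h0.le h1
  rw [R0, div_le_iff₀ hD]
  have h2 : p ^ m < 1 := pow_lt_one₀ h0.le h1 (by omega)
  have h3 : (0:ℝ) ≤ p ^ m := pow_nonneg h0.le m
  have hB := (binEnt_pos h0 h1).le
  have h4 : (0:ℝ) ≤ d := Nat.cast_nonneg d
  have h6 : 0 ≤ binEnt p * ((1 - p) * (p ^ m + d)) :=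
    mul_nonneg hB (mul_nonneg (by linarith) (by linarith))
  nlinarith [h6]

include hm in
lemma R1_le_binEnt {p : ℝ} (h0 : 0 < p) (h1 : p < 1) : R1 d m p ≤ binEnt p := by
  have hD := den1_pos (d := d) hm h0.le h1
  rw [R1, div_le_iff₀ hD]
  have h2 : p ^ m < 1 := pow_lt_one₀ h0.le h1 (by omega)
  have h5 : p ^ m ≤ p ^ (m - 1) := pow_le_pow_of_le_one h0.le h1.le (by omega)
  have hB := (binEnt_pos h0 h1).le
  have h4 : (0:ℝ) ≤ d := Nat.cast_nonneg d
  have h6 : 0 ≤ binEnt p * ((1 - p) * (p ^ (m - 1) - p ^ m + d)) :=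
    mul_nonneg hB (mul_nonneg (by linarith) (by linarith))
  nlinarith [h6]

include hm in
lemma R0_pos {p : ℝ} (h0 : 0 < p) (h1 : p < 1) : 0 < R0 d m p := by
  apply div_pos _ (den0_pos (d := d) hm h0.le h1)
  exact mul_pos (binEnt_pos h0 h1) (by
    have : p ^ m < 1 := pow_lt_one₀ h0.le h1 (by omega); linarith)

end base

section cases
variable {d m : ℕ} (hd : 1 ≤ d) (hm : 2 ≤ m)

include hd hm in
lemma case_gt {p : ℝ} (h1 : p < 1) (hp : 2⁻¹ < p) : R0 d m p < R1 d m p := by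
  have h0 : (0:ℝ) < p := lt_trans (by norm_num) hp
  have hD0 := den0_pos (d := d) hm h0.le h1
  have hD1 := den1_pos (d := d) hm h0.le h1
  have hpm : p ^ m < 1 := pow_lt_one₀ h0.le h1 (by omega)
  have hnum : 0 < binEnt p * (1 - p ^ m) :=
    mul_pos (binEnt_pos h0 h1) (by linarith)
  rw [R0, R1]
  apply div_lt_div_of_pos_left hnum hD1
  have hmm : m - 1 + 1 = m := by omega
  have hps : p ^ m = p ^ (m-1) * p := by rw [← pow_succ, hmm]
  have hppos : 0 < p ^ (m-1) := pow_pos h0 (m-1)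
  nlinarith [mul_pos (mul_pos (show (0:ℝ) < 1 - p by linarith) hppos)
    (show (0:ℝ) < 2*p - 1 by linarith)]

lemma core_ineq (d p u v q : ℝ) (hd : 1 ≤ d) (h0 : 0 < p) (hp : p < 1/2) (hq : q = 1 - p)
    (hu0 : 0 < u) (hu1 : u ≤ p) (hv0 : 0 < v) (hv1 : v ≤ q)
    (hA : v*q - u*p ≤ q - p) (hB : v - u ≤ q - p) :
    (1 - v*q) * (1 - u*p + (1 - p)*(u*p + d)) - (1 - u*p) * (1 - v*q + p*(v - v*q + d)) > 0 := by
  subst hq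
  have hqp : (0:ℝ) < 1 - p - p := by linarith
  set T : ℝ := (1 - p - p) - (v*(1-p)*(1-p) - u*p*p) with hTdef
  set P : ℝ := (1-p)*u*p*(1 - v*(1-p)) - p*p*v*(1 - u*p) with hPdef
  have hid : (1 - v*(1-p)) * (1 - u*p + (1-p)*(u*p + d)) - (1 - u*p) * (1 - v*(1-p) + p*(v - v*(1-p) + d))
      = d * T + P := by rw [hTdef, hPdef]; ring
  have hT : T ≥ (1 - p - p) * p * (1 - u) := by
    rw [hTdef]
    nlinarith [mul_le_mul_of_nonneg_left hA (by linarith : (0:ℝ) ≤ 1 - p),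
      mul_le_mul_of_nonneg_right hu1 (le_of_lt hqp)]
  have hT0 : (0:ℝ) ≤ (1 - p - p) * p * (1 - u) :=
    mul_nonneg (mul_nonneg (le_of_lt hqp) (le_of_lt h0)) (by linarith)
  have hdT : d * T ≥ (1 - p - p) * p * (1 - u) := by nlinarith
  have hP : P ≥ p*(1 - p - p)*(u - p - u*v) := by
    rw [hPdef]
    nlinarith [mul_le_mul_of_nonneg_left hB (le_of_lt h0),
      mul_pos (mul_pos hu0 hv0) h0]
  have huv : u * v < 1 - p := by nlinarith
  have hfin : (1 - p - p) * p * (1 - u) + p*(1 - p - p)*(u - p - u*v)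
      = p * (1 - p - p) * ((1 - p) - u*v) := by ring
  have hlast : (0:ℝ) < p * (1 - p - p) * ((1 - p) - u*v) :=
    mul_pos (mul_pos h0 hqp) (by linarith)
  rw [hid]; linarith

include hd hm in
lemma case_lt {p : ℝ} (h0 : 0 < p) (hp : p < 2⁻¹) : R0 d m p < R1 d m (1 - p) := by
  set q : ℝ := 1 - p with hq
  have hq0 : 0 < q := by rw [hq]; linarith
  have hq1 : q < 1 := by rw [hq]; linarith
  have hpq : p ≤ q := by rw [hq]; linarith
  have h1 : p < 1 := by linarith
  have hD0 := den0_pos (d := d) hm h0.le h1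
  have hD1 := den1_pos (d := d) hm hq0.le hq1
  have hBp : 0 < binEnt p := binEnt_pos h0 h1
  have hBq : binEnt q = binEnt p := by rw [hq]; exact binEnt_one_sub p
  rw [R0, R1, hBq, div_lt_div_iff₀ hD0 hD1]
  have hmm : m - 1 + 1 = m := by omega
  set u : ℝ := p ^ (m-1) with hu
  set v : ℝ := q ^ (m-1) with hv
  have hpm : p ^ m = u * p := by rw [hu, ← pow_succ, hmm]
  have hqm : q ^ m = v * q := by rw [hv, ← pow_succ, hmm]
  have hu0 : 0 < u := pow_pos h0 _
  have hv0 : 0 < v := pow_pos hq0 _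
  have hu1 : u ≤ p := pow_le_of_le_one h0.le h1.le (by omega)
  have hv1 : v ≤ q := pow_le_of_le_one hq0.le hq1.le (by omega)
  have hA : v*q - u*p ≤ q - p := by
    rw [← hpm, ← hqm]
    exact pow_sub_pow_le_sub h0.le hpq (by rw [hq]; ring) (by omega)
  have hB : v - u ≤ q - p := pow_sub_pow_le_sub h0.le hpq (by rw [hq]; ring) (by omega)
  have hqmem : 1 - q = p := by rw [hq]; ring
  rw [hpm, hqm, hqmem]
  have key := core_ineq (d : ℝ) p u v q (by exact_mod_cast hd) h0
    (by rw [show (1:ℝ)/2 = 2⁻¹ by norm_num]; exact hp) hq hu0 hu1 hv0 hv1 hA hB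
  nlinarith [mul_pos hBp key]
end cases

section max
variable {d m : ℕ} (hd : 1 ≤ d) (hm : 2 ≤ m)

include hm in
lemma R0_contOn : ContinuousOn (R0 d m) (Set.Ioo (0:ℝ) 1) := by
  apply ContinuousOn.div
  · exact (binEnt_cont.mul (continuous_const.sub (continuous_pow m))).continuousOn
  · exact ((continuous_const.sub (continuous_pow m)).add
      ((continuous_const.sub continuous_id).mul
        ((continuous_pow m).add continuous_const))).continuousOn
  · exact fun x hx => (den0_pos (d := d) hm hx.1.le hx.2).ne'

include hd hm in
lemma exists_max : ∃ p ∈ Set.Ioo (0:ℝ) 1, ∀ x ∈ Set.Ioo (0:ℝ) 1, R0 d m x ≤ R0 d m p := by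
  set c := R0 d m 2⁻¹ with hc
  have hcpos : 0 < c := R0_pos hm (by norm_num) (by norm_num)
  set K := Set.Icc (0:ℝ) 1 ∩ binEnt ⁻¹' (Set.Ici c) with hK
  have hKcomp : IsCompact K :=
    isCompact_Icc.inter_right (isClosed_Ici.preimage binEnt_cont)
  have hKsub : K ⊆ Set.Ioo (0:ℝ) 1 := by
    rintro x ⟨⟨hx0, hx1⟩, hxc⟩
    have hbx : c ≤ binEnt x := hxc
    constructor
    · rcases eq_or_lt_of_le hx0 with h | h
      · exfalso; rw [← h, binEnt_zero] at hbx; linarith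
      · exact h
    · rcases eq_or_lt_of_le hx1 with h | h
      · exfalso; rw [h, binEnt_one] at hbx; linarith
      · exact h
  have hhalfK : (2⁻¹:ℝ) ∈ K := by
    refine ⟨by norm_num, ?_⟩
    show c ≤ binEnt 2⁻¹
    exact R0_le_binEnt hm (by norm_num) (by norm_num)
  obtain ⟨p, hpK, hmax'⟩ := hKcomp.exists_isMaxOn ⟨_, hhalfK⟩
    ((R0_contOn (d := d) hm).mono hKsub)
  have hmax : ∀ x ∈ K, R0 d m x ≤ R0 d m p := fun x hx => hmax' hx
  refine ⟨p, hKsub hpK, fun x hx => ?_⟩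
  by_cases hcb : c ≤ binEnt x
  · exact hmax x ⟨⟨hx.1.le, hx.2.le⟩, hcb⟩
  · push_neg at hcb
    calc R0 d m x ≤ binEnt x := R0_le_binEnt hm hx.1 hx.2
    _ ≤ c := hcb.le
    _ = R0 d m 2⁻¹ := hc
    _ ≤ R0 d m p := hmax _ hhalfK
end max

section deriv
variable {d m : ℕ} (hd : 1 ≤ d) (hm : 2 ≤ m)

lemma binEnt_hasDeriv_half : HasDerivAt binEnt 0 (2⁻¹ : ℝ) := by
  have h := Real.hasDerivAt_binEntropy (p := (2⁻¹:ℝ)) (by norm_num) (by norm_num)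
  have h2 := h.div_const (Real.log 2)
  have hfn : binEnt = fun p => Real.binEntropy p / Real.log 2 := funext binEnt_eq
  rw [hfn]
  rw [show (1:ℝ) - 2⁻¹ = 2⁻¹ by norm_num, sub_self, zero_div] at h2
  exact h2

include hd hm in
lemma half_not_max : ¬ (∀ x ∈ Set.Ioo (0:ℝ) 1, R0 d m x ≤ R0 d m 2⁻¹) := by
  intro hctr
  have hloc : IsLocalMax (R0 d m) 2⁻¹ := by
    have hmem : Set.Ioo (0:ℝ) 1 ∈ nhds (2⁻¹:ℝ) := isOpen_Ioo.mem_nhds (by norm_num)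
    exact Filter.eventually_of_mem hmem (fun x hx => hctr x hx)
  -- build the derivative
  have hpow : HasDerivAt (fun x : ℝ => x ^ m) ((m:ℝ) * (2⁻¹:ℝ) ^ (m-1)) 2⁻¹ :=
    hasDerivAt_pow m _
  have hN : HasDerivAt (fun x : ℝ => 1 - x ^ m) (0 - (m:ℝ) * (2⁻¹:ℝ) ^ (m-1)) 2⁻¹ :=
    (hasDerivAt_const _ 1).sub hpow
  have hnum := binEnt_hasDeriv_half.mul hN
  have hden : HasDerivAt (fun x : ℝ => 1 - x ^ m + (1 - x) * (x ^ m + d))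
      ((0 - (m:ℝ) * (2⁻¹:ℝ) ^ (m-1)) +
        ((0 - 1) * ((2⁻¹:ℝ) ^ m + d) + (1 - 2⁻¹) * ((m:ℝ) * (2⁻¹:ℝ) ^ (m-1)))) 2⁻¹ :=
    ((hasDerivAt_const _ 1).sub hpow).add
      (((hasDerivAt_const _ 1).sub (hasDerivAt_id _)).mul (hpow.add_const _))
  have hDne : (1 : ℝ) - (2⁻¹:ℝ) ^ m + (1 - 2⁻¹) * ((2⁻¹:ℝ) ^ m + d) ≠ 0 :=
    (den0_pos (d := d) hm (by norm_num) (by norm_num)).ne'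
  have hR := hnum.div hden hDne
  have hzero := hloc.hasDerivAt_eq_zero hR
  simp only [Pi.mul_apply] at hzero; rw [binEnt_half] at hzero
  have hmm : m - 1 + 1 = m := by omega
  have hpm : (2⁻¹:ℝ) ^ m = (2⁻¹:ℝ) ^ (m-1) * 2⁻¹ := by rw [← pow_succ, hmm]
  have hs2t : (2⁻¹:ℝ) ^ (m-1) = 2 * (2⁻¹:ℝ) ^ m := by rw [hpm]; ring
  rw [hs2t] at hzero
  set t : ℝ := (2⁻¹:ℝ) ^ m with htdef
  set X : ℝ := (2:ℝ) ^ m with hXdef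
  have ht : t * X = 1 := by rw [htdef, hXdef, ← mul_pow]; norm_num
  have hBne : (1 : ℝ) - t + (1 - 2⁻¹) * (t + d) ≠ 0 := by
    have := den0_pos (d := d) hm (p := 2⁻¹) (by norm_num) (by norm_num)
    exact this.ne'
  rcases div_eq_zero_iff.mp hzero with h | h
  · have key : X * ((1 - (m:ℝ)) + (d:ℝ) * (X - ((m:ℝ) + 1))) = 1 := by
      linear_combination (X^2) * h + (((m:ℝ)-1)*X + t*X + 1 + (d:ℝ)*((m:ℝ)+1)*X) * ht
    have keyZ : (2:ℤ)^m * ((1 - (m:ℤ)) + (d:ℤ) * ((2:ℤ)^m - ((m:ℤ) + 1))) = 1 := by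
      have hcast : (((2:ℤ)^m * ((1 - (m:ℤ)) + (d:ℤ) * ((2:ℤ)^m - ((m:ℤ) + 1))) : ℤ) : ℝ)
          = ((1:ℤ) : ℝ) := by push_cast; linear_combination key
      exact_mod_cast hcast
    have h2 : (2:ℤ) ∣ (2:ℤ)^m * ((1 - (m:ℤ)) + (d:ℤ) * ((2:ℤ)^m - ((m:ℤ) + 1))) :=
      Dvd.dvd.mul_right (dvd_pow_self 2 (by omega : m ≠ 0)) _
    rw [keyZ] at h2
    norm_num at h2
  · exact absurd h (pow_ne_zero 2 hBne)
end deriv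

/-- For `d ≥ 1` and `d+2 ≤ k < ∞`, the maximum average rate of bit flipping (SS(1))
exceeds the maximum average rate of bit stuffing (SS(0)). -/
theorem stmt_2 (d k : ℕ) (hd : 1 ≤ d) (hk : d + 2 ≤ k) :
    sSup ((fun p => ssRate 0 d k p) '' Set.Ioo (0 : ℝ) 1) <
      sSup ((fun p => ssRate 1 d k p) '' Set.Ioo (0 : ℝ) 1) := by
  have hm : 2 ≤ k - d := by omega
  have he0 : (fun p => ssRate 0 d k p) = R0 d (k - d) := funext (ssRate_zero_eq d k)
  have he1 : (fun p => ssRate 1 d k p) = R1 d (k - d) := funext (ssRate_one_eq d k)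
  rw [he0, he1]
  set m := k - d with hmdef
  have hhalfI : (2⁻¹:ℝ) ∈ Set.Ioo (0:ℝ) 1 := by norm_num
  have hbdd0 : BddAbove (R0 d m '' Set.Ioo (0:ℝ) 1) := by
    refine ⟨1, ?_⟩; rintro y ⟨x, hx, rfl⟩
    exact le_trans (R0_le_binEnt hm hx.1 hx.2) (binEnt_le_one x)
  have hbdd1 : BddAbove (R1 d m '' Set.Ioo (0:ℝ) 1) := by
    refine ⟨1, ?_⟩; rintro y ⟨x, hx, rfl⟩
    exact le_trans (R1_le_binEnt hm hx.1 hx.2) (binEnt_le_one x)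
  have hne0 : (R0 d m '' Set.Ioo (0:ℝ) 1).Nonempty :=
    ⟨_, Set.mem_image_of_mem _ hhalfI⟩
  obtain ⟨p, hpI, hmax⟩ := exists_max hd hm
  have hS0 : sSup (R0 d m '' Set.Ioo (0:ℝ) 1) = R0 d m p := by
    refine le_antisymm (csSup_le hne0 ?_) (le_csSup hbdd0 (Set.mem_image_of_mem _ hpI))
    rintro y ⟨x, hx, rfl⟩
    exact hmax x hx
  rw [hS0]
  have hex : ∃ q ∈ Set.Ioo (0:ℝ) 1, R0 d m p < R1 d m q := by
    rcases lt_trichotomy p 2⁻¹ with h | h | h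
    · exact ⟨1 - p, ⟨by linarith [hpI.2], by linarith [hpI.1]⟩, case_lt hd hm hpI.1 h⟩
    · subst h
      exact absurd hmax (half_not_max hd hm)
    · exact ⟨p, hpI, case_gt hd hm hpI.2 h⟩
  obtain ⟨q, hqI, hlt⟩ := hex
  exact lt_of_lt_of_le hlt (le_csSup hbdd1 (Set.mem_image_of_mem _ hqI))
end

section
/- Let d ≥ 0 and k be integers with d+2 ≤ k < ∞, and let λ > 1 be the real number satisfying Σ_{j=d+1}^{k+1} λ^{-j} = 1. There exists p ∈ (0,1) such that p^{k-d-1}(1-p) = λ^{-(k+1)}, p^{k-d} = λ^{-k}, and p^{k-d-i}(1-p) = λ^{-(k-i+1)} for every integer i with 2 ≤ i ≤ k-d, if and only if d = 2 and k = 4. (That is, among constraints with d+2 ≤ k < ∞, the bit flipping phrase probability vector v^1 matches the maxentropic vector Λ exactly when (d,k) = (2,4).) -/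
/-- Among constraints with `d+2 ≤ k < ∞`, the bit flipping phrase probability vector
matches the maxentropic vector exactly when `(d,k) = (2,4)`. -/
theorem stmt_3 (d k : ℕ) (hk : d + 2 ≤ k) (lam : ℝ) (hlam : 1 < lam)
    (hroot : ∑ j ∈ Finset.Icc (d + 1) (k + 1), lam⁻¹ ^ j = 1) :
    (∃ p : ℝ, 0 < p ∧ p < 1 ∧
      p ^ (k - d - 1) * (1 - p) = lam⁻¹ ^ (k + 1) ∧
      p ^ (k - d) = lam⁻¹ ^ k ∧
      (∀ i : ℕ, 2 ≤ i → i ≤ k - d →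
        p ^ (k - d - i) * (1 - p) = lam⁻¹ ^ (k - i + 1))) ↔ (d = 2 ∧ k = 4) := by
  set q := lam⁻¹ with hqdef
  have hlam0 : (0:ℝ) < lam := by linarith
  have hq0 : 0 < q := by rw [hqdef]; positivity
  have hq1 : q < 1 := by rw [hqdef]; exact inv_lt_one_of_one_lt₀ hlam
  constructor
  · rintro ⟨p, hp0, hp1, h1, h2, h3⟩
    have h1p : 0 < 1 - p := by linarith
    by_cases hm : k - d = 2
    · -- k = d + 2
      obtain ⟨c, hc⟩ : ∃ c, k = c + 2 := ⟨k - 2, by omega⟩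
      have hA := h3 2 le_rfl (by omega)
      rw [show k - d - 2 = 0 by omega, show k - 2 + 1 = c + 1 by omega] at hA
      rw [show k - d - 1 = 1 by omega, show k + 1 = c + 3 by omega] at h1
      rw [hm, show k = c + 2 from hc] at h2
      simp only [pow_zero, pow_one, one_mul] at hA h1
      have hpq : p = q ^ 2 := by
        have hcanc : p * q ^ (c + 1) = q ^ 2 * q ^ (c + 1) := by
          calc p * q ^ (c + 1) = p * (1 - p) := by rw [hA]
            _ = q ^ (c + 3) := h1
            _ = q ^ 2 * q ^ (c + 1) := by ring
        exact mul_right_cancel₀ (by positivity) hcanc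
      have h4 : q ^ 4 = q ^ (c + 2) := by
        rw [← h2, hpq, ← pow_mul]
      have hc2 : c + 2 = 4 := by
        by_contra hne
        rcases Nat.lt_or_ge (c + 2) 4 with h | h
        · have := pow_lt_pow_right_of_lt_one₀ hq0 hq1 h
          linarith [h4 ▸ this]
        · have h' : 4 < c + 2 := by omega
          have := pow_lt_pow_right_of_lt_one₀ hq0 hq1 h'
          linarith [h4 ▸ this]
      omega
    · -- k - d ≥ 3
      have hm3 : 3 ≤ k - d := by omega
      have hA := h3 2 le_rfl (by omega)
      have hB := h3 3 (by norm_num) hm3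
      rw [show k - d - 2 = (k - d - 3) + 1 by omega,
        show k - 2 + 1 = (k - 3) + 2 by omega] at hA
      rw [show k - 3 + 1 = (k - 3) + 1 by omega] at hB
      rw [show k - d - 1 = (k - d - 3) + 2 by omega,
        show k + 1 = (k - 3) + 4 by omega] at h1
      set a := k - d - 3
      set b := k - 3
      have hpq1 : p = q := by
        have hcanc : p * q ^ (b + 1) = q * q ^ (b + 1) := by
          calc p * q ^ (b + 1) = p * (p ^ a * (1 - p)) := by rw [hB]
            _ = p ^ (a + 1) * (1 - p) := by ring
            _ = q ^ (b + 2) := hA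
            _ = q * q ^ (b + 1) := by ring
        exact mul_right_cancel₀ (by positivity) hcanc
      have hpq2 : p = q ^ 2 := by
        have hcanc : p * q ^ (b + 2) = q ^ 2 * q ^ (b + 2) := by
          calc p * q ^ (b + 2) = p * (p ^ (a + 1) * (1 - p)) := by rw [hA]
            _ = p ^ (a + 2) * (1 - p) := by ring
            _ = q ^ (b + 4) := h1
            _ = q ^ 2 * q ^ (b + 2) := by ring
        exact mul_right_cancel₀ (by positivity) hcanc
      nlinarith [hpq1, hpq2, hq0, hq1]
  · rintro ⟨hd, hk4⟩
    subst hd hk4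
    have hsum : q ^ 3 + q ^ 4 + q ^ 5 = 1 := by
      rw [show (Finset.Icc (2 + 1) (4 + 1) : Finset ℕ) = {3, 4, 5} from rfl] at hroot
      simp [Finset.sum_insert, Finset.mem_insert] at hroot
      linarith
    have h0 : (q ^ 2 + 1) * (q ^ 3 + q ^ 2 - 1) = 0 := by linear_combination hsum
    have h0' : q ^ 3 + q ^ 2 - 1 = 0 := by
      rcases mul_eq_zero.mp h0 with h | h
      · nlinarith
      · exact h
    refine ⟨q ^ 2, by positivity, by nlinarith, ?_, ?_, ?_⟩
    · norm_num
      linear_combination (-(q ^ 2)) * h0'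
    · norm_num
      ring
    · intro i h2i hi2
      have hi : i = 2 := by omega
      subst hi
      norm_num
      linarith
end

section
/- Let d ≥ 0 be an integer and let z > 1 be a real number. Then Σ_{l=d+1}^{2d+2} z^{-l} = 1 if and only if z^{-1} + z^{-(d+2)} = 1. (Consequently the capacity of the (d,2d+1) constraint equals the capacity of the (d+1,∞) constraint.) -/
/-- The characteristic equation of the `(d, 2d+1)` constraint holds iff the
characteristic equation of the `(d+1, ∞)` constraint holds. -/
theorem stmt_4 (d : ℕ) (z : ℝ) (hz : 1 < z) :
    (∑ l ∈ Finset.Icc (d + 1) (2 * d + 2), z⁻¹ ^ l = 1) ↔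
      z⁻¹ + z⁻¹ ^ (d + 2) = 1 := by
  set x : ℝ := z⁻¹ with hx
  have hz0 : (0:ℝ) < z := lt_trans one_pos hz
  have hx0 : 0 < x := inv_pos.mpr hz0
  have hx1 : x < 1 := inv_lt_one_of_one_lt₀ hz
  have hxne : x ≠ 1 := ne_of_lt hx1
  have hIcc : Finset.Icc (d + 1) (2 * d + 2) = Finset.Ico (d + 1) (2 * d + 3) := by
    rw [show 2 * d + 3 = (2 * d + 2) + 1 from rfl, Finset.Ico_add_one_right_eq_Icc]
  have hsum : ∑ l ∈ Finset.Icc (d + 1) (2 * d + 2), x ^ l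
      = (x ^ (2 * d + 3) - x ^ (d + 1)) / (x - 1) := by
    rw [hIcc, geom_sum_Ico hxne (by omega)]
  have hxm1 : x - 1 ≠ 0 := sub_ne_zero.mpr hxne
  have hpow : x ^ (d + 1) < 1 := pow_lt_one₀ hx0.le hx1 (by omega)
  have hfac : (1 : ℝ) - x ^ (d + 1) ≠ 0 := by linarith
  have hc : x ^ (2 * d + 3) = x ^ (d + 1) * x ^ (d + 2) := by
    rw [← pow_add]; ring_nf
  have he2 : x ^ (d + 2) = x ^ (d + 1) * x := pow_succ x (d + 1)
  rw [hsum, div_eq_one_iff_eq hxm1]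
  constructor
  · intro h
    have key : (1 - x ^ (d + 1)) * (1 - x - x ^ (d + 2)) = 0 := by
      linear_combination h - hc - he2
    have h2 : (1 : ℝ) - x - x ^ (d + 2) = 0 := by
      rcases mul_eq_zero.mp key with h' | h'
      · exact absurd h' hfac
      · exact h'
    linarith
  · intro h
    linear_combination hc + (x ^ (d + 1) - 1) * h + he2
end

section
/- Let d ≥ 0 be an integer, let k = 2d+1, let λ > 1 be a real number satisfying Σ_{j=d+1}^{2d+2} λ^{-j} = 1, and set p = λ^{-1}. Then p^{d+1} = λ^{-(d+1)}, 1-p = λ^{-(d+2)}, and p^{i-1}(1-p) = λ^{-(d+i+1)} for every integer i with 2 ≤ i ≤ d+1. (That is, the phrase probability vector of the symbol sliding algorithm SS(d+1) with bias λ^{-1} equals the maxentropic phrase probability vector Λ for the (d,2d+1) constraint.) -/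
/-- For the `(d, 2d+1)` constraint, symbol sliding SS(d+1) with bias `p = lam⁻¹`
produces the maxentropic phrase probability vector. -/
theorem stmt_5 (d : ℕ) (lam : ℝ) (hlam : 1 < lam)
    (hroot : ∑ j ∈ Finset.Icc (d + 1) (2 * d + 2), lam⁻¹ ^ j = 1)
    (p : ℝ) (hp : p = lam⁻¹) :
    p ^ (d + 1) = lam⁻¹ ^ (d + 1) ∧
    1 - p = lam⁻¹ ^ (d + 2) ∧
    (∀ i : ℕ, 2 ≤ i → i ≤ d + 1 →
      p ^ (i - 1) * (1 - p) = lam⁻¹ ^ (d + i + 1)) := by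
  set x : ℝ := lam⁻¹ with hx
  have hx0 : 0 < x := by positivity
  have hx1 : x < 1 := by
    rw [hx, inv_lt_one_iff₀]; right; exact hlam
  have hxne : x ≠ 1 := ne_of_lt hx1
  -- geometric sum
  have hIcc : Finset.Icc (d + 1) (2 * d + 2) = Finset.Ico (d + 1) (2 * d + 3) := by
    exact (Finset.Ico_add_one_right_eq_Icc (a := d + 1) (b := 2 * d + 2)).symm
  have hgs : ∑ j ∈ Finset.Icc (d + 1) (2 * d + 2), x ^ j
      = (x ^ (2 * d + 3) - x ^ (d + 1)) / (x - 1) := by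
    rw [hIcc]
    exact geom_sum_Ico hxne (by omega)
  have heq : x ^ (2 * d + 3) - x ^ (d + 1) = x - 1 := by
    have h := hroot
    rw [hgs] at h
    have hx1' : x - 1 ≠ 0 := sub_ne_zero.mpr hxne
    field_simp at h
    linarith [h]
  have hsplit : x ^ (d + 1) * x ^ (d + 2) = x ^ (2 * d + 3) := by
    rw [← pow_add]; congr 1; omega
  have hAx : x ^ (d + 1) * x = x ^ (d + 2) := by
    rw [← pow_succ]
  have hkey0 : (x ^ (d + 1) - 1) * (x ^ (d + 2) + x - 1) = 0 := by
    linear_combination heq - hsplit + hAx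
  have hfac : x ^ (d + 1) - 1 ≠ 0 := by
    have : x ^ (d + 1) < 1 := pow_lt_one₀ (le_of_lt hx0) hx1 (by omega)
    linarith
  have hkey : 1 - x = x ^ (d + 2) := by
    rcases mul_eq_zero.mp hkey0 with h | h
    · exact absurd h hfac
    · linarith
  refine ⟨by rw [hp], by rw [hp]; exact hkey, ?_⟩
  intro i h2 hle
  rw [hp, hkey, ← pow_add]
  congr 1
  omega
end

section
/- Let d ≥ 0 be an integer and let λ > 1 be a real number satisfying Σ_{j=d+1}^{2d+2} λ^{-j} = 1. Then h(λ^{-1}) · (1 - λ^{-(d+1)}) / (1 - λ^{-(d+1)} + (1 - λ^{-1})·(1 - (d+1)·λ^{-(d+1)} + d)) = log₂ λ. (That is, the average rate of symbol sliding SS(d+1) with bias λ^{-1} equals the Shannon capacity of the (d,2d+1) constraint.) -/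
/-- The average rate of symbol sliding SS(d+1) with bias `lam⁻¹` equals the Shannon
capacity `log₂ lam` of the `(d, 2d+1)` constraint. -/
theorem stmt_6 (d : ℕ) (lam : ℝ) (hlam : 1 < lam)
    (hroot : ∑ j ∈ Finset.Icc (d + 1) (2 * d + 2), lam⁻¹ ^ j = 1) :
    binEnt lam⁻¹ * (1 - lam⁻¹ ^ (d + 1)) /
      (1 - lam⁻¹ ^ (d + 1) +
        (1 - lam⁻¹) * (1 - ((d : ℝ) + 1) * lam⁻¹ ^ (d + 1) + (d : ℝ))) =
    Real.logb 2 lam := by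
  have hl0 : (0:ℝ) < lam := lt_trans one_pos hlam
  set p := lam⁻¹ with hpdef
  have hp0 : 0 < p := inv_pos.mpr hl0
  have hp1 : p < 1 := by
    rw [hpdef]
    exact inv_lt_one_of_one_lt₀ hlam
  have hq1 : p ^ (d + 1) < 1 := pow_lt_one₀ hp0.le hp1 (Nat.succ_ne_zero d)
  have hpne1 : p ≠ 1 := ne_of_lt hp1
  -- geometric sum
  have h1 : p ^ (2 * d + 3) - p ^ (d + 1) = p - 1 := by
    have hIcc : Finset.Icc (d + 1) (2 * d + 2) = Finset.Ico (d + 1) (2 * d + 3) := by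
      rw [show 2 * d + 3 = (2 * d + 2) + 1 from rfl, Finset.Ico_add_one_right_eq_Icc]
    rw [hIcc, geom_sum_Ico hpne1 (by omega)] at hroot
    have hden : p - 1 ≠ 0 := sub_ne_zero.mpr hpne1
    field_simp at hroot
    linarith [hroot]
  have hfac : (p ^ (d + 1) - 1) * (p ^ (d + 2) + p - 1) = 0 := by
    linear_combination h1
  have hkey : p ^ (d + 2) = 1 - p := by
    rcases mul_eq_zero.mp hfac with h | h
    · nlinarith [hq1]
    · linarith
  have hlogp : Real.logb 2 p = -Real.logb 2 lam := by
    rw [hpdef, Real.logb_inv]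
  have hlog1p : Real.logb 2 (1 - p) = -(((d:ℝ) + 2)) * Real.logb 2 lam := by
    rw [← hkey, Real.logb_pow, hlogp]
    push_cast
    ring
  have hN : (0:ℝ) < 1 - p ^ (d + 1) := by linarith
  have hd0 : (0:ℝ) ≤ (d:ℝ) := Nat.cast_nonneg d
  have hS : (0:ℝ) < 1 + ((d:ℝ) + 1) * (1 - p) := by nlinarith
  have hD : (0:ℝ) < 1 - p ^ (d + 1) +
      (1 - p) * (1 - ((d:ℝ) + 1) * p ^ (d + 1) + (d:ℝ)) := by
    have : 1 - p ^ (d + 1) + (1 - p) * (1 - ((d:ℝ) + 1) * p ^ (d + 1) + (d:ℝ))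
        = (1 - p ^ (d + 1)) * (1 + ((d:ℝ) + 1) * (1 - p)) := by ring
    rw [this]
    exact mul_pos hN hS
  rw [div_eq_iff (ne_of_gt hD)]
  unfold binEnt
  rw [hlogp, hlog1p]
  ring
end

section
/- Let 0 ≤ d < k < ∞ be integers, let 0 ≤ j ≤ k-d, and let λ > 1 be the real number satisfying Σ_{j'=d+1}^{k+1} λ^{-j'} = 1. There exists p ∈ (0,1) such that p^{k-d-i-1}(1-p) = λ^{-(k-i+1)} for all integers 0 ≤ i ≤ j-1, p^{k-d} = λ^{-(k-j+1)}, and p^{k-d-i}(1-p) = λ^{-(k-i+1)} for all integers j+1 ≤ i ≤ k-d, if and only if one of the following holds: (1) j = 0 and k = d+1; (2) j = 1 and k = d+1; (3) j = 1, d = 2 and k = 4; (4) j = k-d and k = 2d+1. (That is, for finite k, symbol sliding SS(j) achieves capacity exactly in these cases.) -/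
lemma ss_pow_inj {q : ℝ} (h0 : 0 < q) (h1 : q < 1) {a b : ℕ} (h : q ^ a = q ^ b) : a = b := by
  by_contra hne
  rcases Nat.lt_or_ge a b with hab | hab
  · exact absurd h (ne_of_gt (pow_lt_pow_right_of_lt_one₀ h0 h1 hab))
  · have hab' : b < a := lt_of_le_of_ne hab (Ne.symm hne)
    exact absurd h.symm (ne_of_gt (pow_lt_pow_right_of_lt_one₀ h0 h1 hab'))

lemma ss_step {p q : ℝ} (hq : 0 < q) {s t : ℕ} (h1 : p ^ (s + 1) * (1 - p) = q ^ (t + 1))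
    (h2 : p ^ s * (1 - p) = q ^ t) : p = q := by
  have ht : q ^ t ≠ 0 := pow_ne_zero _ hq.ne'
  have : p * q ^ t = q * q ^ t := by
    calc p * q ^ t = p * (p ^ s * (1 - p)) := by rw [h2]
    _ = p ^ (s + 1) * (1 - p) := by ring
    _ = q ^ (t + 1) := h1
    _ = q * q ^ t := by ring
  exact mul_right_cancel₀ ht this

lemma ss_cancel {q x : ℝ} (hq0 : 0 < q) (a e : ℕ) (h : q ^ a * x = q ^ (a + e)) : x = q ^ e := by
  have hne : q ^ a ≠ 0 := pow_ne_zero _ hq0.ne'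
  rw [pow_add] at h
  exact mul_left_cancel₀ hne h

lemma ss_key {q : ℝ} {d k : ℕ} (hdk : d < k)
    (hroot : ∑ j' ∈ Finset.Icc (d + 1) (k + 1), q ^ j' = 1) :
    q ^ (d + 1) * (1 - q ^ (k + 1 - d)) = 1 - q := by
  rw [← Finset.Ico_add_one_right_eq_Icc, Finset.sum_Ico_eq_sum_range] at hroot
  simp_rw [pow_add, ← Finset.mul_sum] at hroot
  rw [show k + 1 + 1 - (d + 1) = k + 1 - d from by omega] at hroot
  have h2 : (∑ i ∈ Finset.range (k + 1 - d), q ^ i) * (1 - q) = 1 - q ^ (k + 1 - d) := by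
    linear_combination -geom_sum_mul q (k + 1 - d)
  calc q ^ (d + 1) * (1 - q ^ (k + 1 - d))
      = q ^ (d + 1) * ((∑ i ∈ Finset.range (k + 1 - d), q ^ i) * (1 - q)) := by rw [h2]
    _ = (q ^ (d + 1) * ∑ i ∈ Finset.range (k + 1 - d), q ^ i) * (1 - q) := by ring
    _ = 1 * (1 - q) := by linear_combination (1 - q) * hroot
    _ = 1 - q := by ring

/-- For finite `k`, the symbol sliding SS(j) phrase probability vector matches the
maxentropic vector exactly in the listed cases. -/
theorem stmt_7 (d k j : ℕ) (hdk : d < k) (hj : j ≤ k - d) (lam : ℝ) (hlam : 1 < lam)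
    (hroot : ∑ j' ∈ Finset.Icc (d + 1) (k + 1), lam⁻¹ ^ j' = 1) :
    (∃ p : ℝ, 0 < p ∧ p < 1 ∧
      (∀ i : ℕ, i < j → p ^ (k - d - i - 1) * (1 - p) = lam⁻¹ ^ (k - i + 1)) ∧
      p ^ (k - d) = lam⁻¹ ^ (k - j + 1) ∧
      (∀ i : ℕ, j + 1 ≤ i → i ≤ k - d →
        p ^ (k - d - i) * (1 - p) = lam⁻¹ ^ (k - i + 1))) ↔
    ((j = 0 ∧ k = d + 1) ∨ (j = 1 ∧ k = d + 1) ∨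
      (j = 1 ∧ d = 2 ∧ k = 4) ∨ (j = k - d ∧ k = 2 * d + 1)) := by
  set q : ℝ := lam⁻¹ with hqdef
  have hq0 : 0 < q := inv_pos.mpr (by linarith)
  have hq1 : q < 1 := inv_lt_one_of_one_lt₀ hlam
  obtain ⟨m, hkm, hm1⟩ : ∃ m, k = d + m ∧ 1 ≤ m := ⟨k - d, by omega, by omega⟩
  have hjm : j ≤ m := by omega
  constructor
  · rintro ⟨p, hp0, hp1, hlow, hmid, hupp⟩
    by_cases hm2 : m = 1
    · omega
    · have hm2' : 2 ≤ m := by omega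
      rcases j with _ | (_ | j₂)
      · -- j = 0 : contradiction
        exfalso
        have h1 := hupp 1 (by omega) (by omega)
        have h2 := hupp 2 (by omega) (by omega)
        rw [show k - d - 1 = (m - 2) + 1 from by omega,
          show k - 1 + 1 = (d + m - 1) + 1 from by omega] at h1
        rw [show k - d - 2 = m - 2 from by omega,
          show k - 2 + 1 = d + m - 1 from by omega] at h2
        have hpq := ss_step hq0 h1 h2
        subst hpq
        have hm' := hmid
        rw [show k - d = m from by omega, show k - 0 + 1 = d + m + 1 from by omega] at hm'
        have := ss_pow_inj hq0 hq1 hm'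
        omega
      · -- j = 1
        by_cases hm2'' : m = 2
        · have h0 := hlow 0 (by omega)
          have h2 := hupp 2 (by omega) (by omega)
          rw [show k - d - 0 - 1 = 1 from by omega, show k - 0 + 1 = d + 3 from by omega,
            pow_one] at h0
          rw [show k - d - 2 = 0 from by omega, show k - 2 + 1 = d + 1 from by omega,
            pow_zero, one_mul] at h2
          have hne : q ^ (d + 1) ≠ 0 := pow_ne_zero _ hq0.ne'
          have hp : p = q ^ 2 := by
            refine mul_right_cancel₀ hne ?_
            calc p * q ^ (d + 1) = p * (1 - p) := by rw [h2]
            _ = q ^ (d + 3) := h0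
            _ = q ^ 2 * q ^ (d + 1) := by ring
          have hm' := hmid
          rw [show k - d = 2 from by omega, show k - 1 + 1 = d + 2 from by omega, hp,
            ← pow_mul] at hm'
          have := ss_pow_inj hq0 hq1 hm'
          omega
        · exfalso
          have hm3 : 3 ≤ m := by omega
          have h2 := hupp 2 (by omega) (by omega)
          have h3 := hupp 3 (by omega) (by omega)
          rw [show k - d - 2 = (m - 3) + 1 from by omega,
            show k - 2 + 1 = (d + m - 2) + 1 from by omega] at h2
          rw [show k - d - 3 = m - 3 from by omega,
            show k - 3 + 1 = d + m - 2 from by omega] at h3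
          have hpq := ss_step hq0 h2 h3
          subst hpq
          have hm' := hmid
          rw [show k - d = m from by omega, show k - 1 + 1 = d + m from by omega] at hm'
          have hd0 : m = d + m := ss_pow_inj hq0 hq1 hm'
          have hd : d = 0 := by omega
          have h2' := hupp 2 (by omega) (by omega)
          rw [show k - d - 2 = m - 2 from by omega,
            show k - 2 + 1 = (m - 2) + 1 from by omega] at h2'
          have e1 : 1 - q = q ^ 1 := ss_cancel hq0 _ _ h2'
          have h0 := hlow 0 (by omega)
          rw [show k - d - 0 - 1 = m - 1 from by omega,
            show k - 0 + 1 = (m - 1) + 2 from by omega] at h0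
          have e2 : 1 - q = q ^ 2 := ss_cancel hq0 _ _ h0
          have : (1 : ℕ) = 2 := ss_pow_inj hq0 hq1 (e1.symm.trans e2)
          omega
      · -- j ≥ 2
        have hj2 : j₂ + 1 + 1 ≤ m := by omega
        have h0 := hlow 0 (by omega)
        have h1 := hlow 1 (by omega)
        rw [show k - d - 0 - 1 = (m - 2) + 1 from by omega,
          show k - 0 + 1 = (d + m) + 1 from by omega] at h0
        rw [show k - d - 1 - 1 = m - 2 from by omega,
          show k - 1 + 1 = d + m from by omega] at h1
        have hpq := ss_step hq0 h0 h1
        subst hpq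
        by_cases hjm' : j₂ + 1 + 1 = m
        · have hm' := hmid
          rw [show k - d = m from by omega,
            show k - (j₂ + 1 + 1) + 1 = d + 1 from by omega] at hm'
          have := ss_pow_inj hq0 hq1 hm'
          omega
        · exfalso
          have hu := hupp (j₂ + 1 + 2) (by omega) (by omega)
          rw [show k - d - (j₂ + 1 + 2) = m - j₂ - 3 from by omega,
            show k - (j₂ + 1 + 2) + 1 = (m - j₂ - 3) + (d + 1) from by omega] at hu
          have e1 : 1 - q = q ^ (d + 1) := ss_cancel hq0 _ _ hu
          have h0' := hlow 0 (by omega)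
          rw [show k - d - 0 - 1 = m - 1 from by omega,
            show k - 0 + 1 = (m - 1) + (d + 2) from by omega] at h0'
          have e2 : 1 - q = q ^ (d + 2) := ss_cancel hq0 _ _ h0'
          have : d + 1 = d + 2 := ss_pow_inj hq0 hq1 (e1.symm.trans e2)
          omega
  · have hkey := ss_key hdk hroot
    have h1q : (1 : ℝ) - q ≠ 0 := sub_ne_zero.mpr (ne_of_gt hq1)
    rintro (⟨hj0, hk⟩ | ⟨hj1, hk⟩ | ⟨hj1, hd2, hk4⟩ | ⟨hjkd, hk⟩)
    · -- j = 0, k = d + 1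
      subst hj0; subst hk
      rw [show d + 1 + 1 - d = 2 from by omega] at hkey
      have hA : q ^ (d + 1) + q ^ (d + 2) = 1 := by
        refine mul_right_cancel₀ h1q ?_
        linear_combination hkey
      refine ⟨q ^ (d + 2), pow_pos hq0 _, pow_lt_one₀ hq0.le hq1 (by omega), ?_, ?_, ?_⟩
      · intro i hi; omega
      · rw [show d + 1 - d = 1 from by omega, pow_one, show d + 1 - 0 + 1 = d + 2 from by omega]
      · intro i hi1 hi2
        have hi : i = 1 := by omega
        subst hi
        rw [show d + 1 - d - 1 = 0 from by omega, pow_zero, one_mul,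
          show d + 1 - 1 + 1 = d + 1 from by omega]
        linarith
    · -- j = 1, k = d + 1
      subst hj1; subst hk
      rw [show d + 1 + 1 - d = 2 from by omega] at hkey
      have hA : q ^ (d + 1) + q ^ (d + 2) = 1 := by
        refine mul_right_cancel₀ h1q ?_
        linear_combination hkey
      refine ⟨q ^ (d + 1), pow_pos hq0 _, pow_lt_one₀ hq0.le hq1 (by omega), ?_, ?_, ?_⟩
      · intro i hi
        have hi0 : i = 0 := by omega
        subst hi0
        rw [show d + 1 - d - 0 - 1 = 0 from by omega, pow_zero, one_mul,
          show d + 1 - 0 + 1 = d + 2 from by omega]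
        linarith
      · rw [show d + 1 - d = 1 from by omega, pow_one, show d + 1 - 1 + 1 = d + 1 from by omega]
      · intro i hi1 hi2; omega
    · -- j = 1, d = 2, k = 4
      subst hj1; subst hd2; subst hk4
      norm_num at hkey
      have hroot' : q ^ 3 + q ^ 4 + q ^ 5 = 1 := by
        refine mul_right_cancel₀ h1q ?_
        linear_combination hkey
      have hf : (q ^ 2 + 1) * (q ^ 2 + q ^ 3 - 1) = 0 := by linear_combination hroot'
      have hB : q ^ 2 + q ^ 3 = 1 := by
        rcases mul_eq_zero.mp hf with h | h
        · nlinarith [sq_nonneg q]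
        · linarith
      refine ⟨q ^ 2, pow_pos hq0 _, pow_lt_one₀ hq0.le hq1 (by omega), ?_, ?_, ?_⟩
      · intro i hi
        have hi0 : i = 0 := by omega
        subst hi0
        norm_num
        linear_combination (-(q ^ 2)) * hB
      · norm_num
        ring
      · intro i hi1 hi2
        have hi : i = 2 := by omega
        subst hi
        norm_num
        linarith
    · -- j = k - d, k = 2d + 1
      subst hk
      have hj' : j = d + 1 := by omega
      subst hj'
      rw [show 2 * d + 1 + 1 - d = d + 2 from by omega] at hkey
      have hlt : q ^ (d + 1) < 1 := pow_lt_one₀ hq0.le hq1 (by omega)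
      have hf : (1 - q ^ (d + 1)) * (q ^ (d + 2) - (1 - q)) = 0 := by
        linear_combination hkey
      have hC : q ^ (d + 2) = 1 - q := by
        rcases mul_eq_zero.mp hf with h | h
        · exfalso; linarith
        · linarith
      refine ⟨q, hq0, hq1, ?_, ?_, ?_⟩
      · intro i hi
        rw [show 2 * d + 1 - d - i - 1 = d - i from by omega,
          show 2 * d + 1 - i + 1 = (d - i) + (d + 2) from by omega, pow_add, hC]
      · rw [show 2 * d + 1 - d = d + 1 from by omega,
          show 2 * d + 1 - (d + 1) + 1 = d + 1 from by omega]
      · intro i hi1 hi2; omega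
end

section
/- Let d ≥ 0 be an integer, let λ > 1 be a real number satisfying λ^{-(d+1)} + λ^{-(d+2)} + λ^{-(d+3)} = 1, and suppose there exists p ∈ (0,1) with 1-p = λ^{-(d+1)}, p² = λ^{-(d+2)} and p(1-p) = λ^{-(d+3)}. Then d = 2. -/
/-- If the bit flipping phrase probability vector for the `(d, d+2)` constraint equals
the maxentropic vector, then `d = 2`. -/
theorem stmt_8 (d : ℕ) (lam : ℝ) (hlam : 1 < lam)
    (hroot : lam⁻¹ ^ (d + 1) + lam⁻¹ ^ (d + 2) + lam⁻¹ ^ (d + 3) = 1)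
    (hp : ∃ p : ℝ, 0 < p ∧ p < 1 ∧
      1 - p = lam⁻¹ ^ (d + 1) ∧ p ^ 2 = lam⁻¹ ^ (d + 2) ∧
      p * (1 - p) = lam⁻¹ ^ (d + 3)) :
    d = 2 := by
  obtain ⟨p, hp0, hp1, h1, h2, h3⟩ := hp
  set q := lam⁻¹ with hq
  have hq0 : 0 < q := inv_pos.mpr (by linarith)
  have hq1 : q < 1 := inv_lt_one_of_one_lt₀ hlam
  have hqp : 1 - p = q * p := by
    have h : p * (1 - p) = p * (q * p) := by
      rw [h3, pow_succ' q (d + 2), ← h2]; ring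
    exact mul_left_cancel₀ hp0.ne' h
  have hpq : p = q ^ d := by
    have h : q * p = q * q ^ d := by
      rw [← hqp, h1, pow_succ']
    exact mul_left_cancel₀ hq0.ne' h
  have hkey : q ^ (2 * d) = q ^ (d + 2) := by
    rw [← h2, hpq, ← pow_mul, Nat.mul_comm]
  have := pow_right_injective₀ hq0 (ne_of_lt hq1) hkey
  omega
end

section
/- Let z > 1 be a real number. Then z^{-3} + z^{-4} + z^{-5} = 1 if and only if z^{-2} + z^{-3} = 1. (Consequently the Shannon capacity of the (2,4) constraint equals the Shannon capacity of the (1,2) constraint.) -/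
/-- The characteristic equation of the `(2,4)` constraint holds iff the characteristic
equation of the `(1,2)` constraint holds; hence `C(2,4) = C(1,2)`. -/
theorem stmt_10 (z : ℝ) (hz : 1 < z) :
    (z⁻¹ ^ 3 + z⁻¹ ^ 4 + z⁻¹ ^ 5 = 1) ↔ (z⁻¹ ^ 2 + z⁻¹ ^ 3 = 1) := by
  have key : z⁻¹ ^ 3 + z⁻¹ ^ 4 + z⁻¹ ^ 5 - 1 = (z⁻¹ ^ 2 + 1) * (z⁻¹ ^ 2 + z⁻¹ ^ 3 - 1) := by
    ring
  have hpos : (0:ℝ) < z⁻¹ ^ 2 + 1 := by positivity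
  constructor
  · intro h
    have : (z⁻¹ ^ 2 + 1) * (z⁻¹ ^ 2 + z⁻¹ ^ 3 - 1) = 0 := by linarith
    have := (mul_eq_zero.mp this).resolve_left (ne_of_gt hpos)
    linarith
  · intro h
    nlinarith [key]
end

section
/- Let 0 ≤ d < k < ∞ be integers, let j be an integer with 1 ≤ j ≤ k-d, and let p ∈ (0,1). Then R_j(p,d,k) > R_{j-1}(p,d,k) if and only if p^j + p > 1. -/
private lemma geom_aux (p : ℝ) (hp0 : 0 < p) (hp1 : p < 1) :
    ∀ m : ℕ, 1 ≤ m → (m : ℝ) * (1 - p) * p ^ m < 1 - p ^ m := by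
  intro m hm
  induction m with
  | zero => omega
  | succ n ih =>
    rcases Nat.eq_or_lt_of_le hm with h | h
    · simp [← h]; nlinarith
    · have hn : 1 ≤ n := by omega
      have := ih hn
      have hpn : 0 < p ^ n := pow_pos hp0 n
      have hps : p ^ (n + 1) = p ^ n * p := pow_succ p n
      push_cast
      have hA : p ^ (n + 1) ≤ p ^ n := pow_le_pow_of_le_one hp0.le hp1.le (Nat.le_succ n)
      have hB : ((n : ℝ) + 1) * (1 - p) * p ^ (n + 1) ≤ ((n : ℝ) + 1) * (1 - p) * p ^ n := by
        apply mul_le_mul_of_nonneg_left hA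
        have : (0:ℝ) ≤ (n : ℝ) + 1 := by positivity
        nlinarith
      have hC : ((n : ℝ) + 1) * (1 - p) * p ^ n = (n : ℝ) * (1 - p) * p ^ n + (1 - p) * p ^ n := by
        ring
      have hD : 1 - p ^ (n + 1) = (1 - p ^ n) + (1 - p) * p ^ n := by rw [hps]; ring
      linarith

/-- For `0 ≤ d < k < ∞`, `1 ≤ j ≤ k-d` and `p ∈ (0,1)`, the rate of SS(j) exceeds the
rate of SS(j-1) if and only if `p^j + p > 1`. -/
theorem stmt_11 (d k j : ℕ) (hdk : d < k) (hj1 : 1 ≤ j) (hj2 : j ≤ k - d)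
    (p : ℝ) (hp0 : 0 < p) (hp1 : p < 1) :
    ssRate j d k p > ssRate (j - 1) d k p ↔ p ^ j + p > 1 := by
  set m := k - d with hm
  have hm1 : 1 ≤ m := le_trans hj1 hj2
  have h1p : 0 < 1 - p := by linarith
  have hpm : 0 < p ^ m := pow_pos hp0 m
  have hgeom := geom_aux p hp0 hp1 m hm1
  -- denominators are positive
  have key : ∀ i : ℕ, i ≤ m →
      0 < 1 - p ^ m + (1 - p) * (p ^ (m - i) - (i : ℝ) * p ^ m + (d : ℝ)) := by
    intro i hi
    have h1 : (i : ℝ) * (1 - p) * p ^ m ≤ (m : ℝ) * (1 - p) * p ^ m := by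
      apply mul_le_mul_of_nonneg_right _ hpm.le
      apply mul_le_mul_of_nonneg_right _ h1p.le
      exact_mod_cast hi
    have h2 : 0 < (1 - p) * p ^ (m - i) := mul_pos h1p (pow_pos hp0 _)
    have hd : (0 : ℝ) ≤ (1 - p) * d := mul_nonneg h1p.le (Nat.cast_nonneg d)
    nlinarith
  have Dj := key j hj2
  have Djm := key (j - 1) (le_trans (Nat.sub_le j 1) hj2)
  -- numerator is positive
  have hEnt : 0 < binEnt p := by
    have hl1 : Real.logb 2 p < 0 := Real.logb_neg (by norm_num) hp0 hp1
    have hl2 : Real.logb 2 (1 - p) < 0 := Real.logb_neg (by norm_num) h1p (by linarith)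
    unfold binEnt
    nlinarith [mul_pos hp0 (neg_pos.mpr hl1), mul_pos h1p (neg_pos.mpr hl2)]
  have hN : 0 < binEnt p * (1 - p ^ m) := mul_pos hEnt (by linarith [hgeom, mul_pos (mul_pos (by positivity : (0:ℝ) < (m:ℝ)) h1p) hpm])
  -- the difference of the denominators
  have ej : ((j - 1 : ℕ) : ℝ) = (j : ℝ) - 1 := by
    push_cast [hj1]; ring
  have e1 : p ^ (m - (j - 1)) = p ^ (m - j) * p := by
    rw [show m - (j - 1) = (m - j) + 1 by omega, pow_succ]
  have e2 : p ^ m = p ^ (m - j) * p ^ j := by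
    rw [← pow_add]; congr 1; omega
  have hc : 0 < (1 - p) * p ^ (m - j) := mul_pos h1p (pow_pos hp0 _)
  have hdiff :
      (1 - p ^ m + (1 - p) * (p ^ (m - (j - 1)) - ((j - 1 : ℕ) : ℝ) * p ^ m + (d : ℝ)))
        - (1 - p ^ m + (1 - p) * (p ^ (m - j) - (j : ℝ) * p ^ m + (d : ℝ)))
      = (1 - p) * p ^ (m - j) * (p ^ j + p - 1) := by
    rw [ej, e1, e2]; ring
  simp only [ssRate, ← hm, gt_iff_lt]
  rw [div_lt_div_iff₀ Djm Dj, mul_lt_mul_iff_right₀ hN]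
  constructor
  · intro h
    nlinarith
  · intro h
    nlinarith
end

section
/- Let 0 ≤ d < k < ∞ be integers, let n = k-d, let j be an integer with 0 ≤ j ≤ n, and let p ∈ (0,1). Then Σ_{i=0}^{j-1} (k-i+1)·p^{n-i-1}·(1-p) + (k-j+1)·p^n + Σ_{i=j+1}^{n} (k-i+1)·p^{n-i}·(1-p) = (1 - p^n + (1-p)·(p^{n-j} - j·p^n + d)) / (1-p). (That is, the average output codeword length L_out^j of the symbol sliding encoder SS(j) has this closed form.) -/
private lemma sumB (c : ℕ) (p : ℝ) (n : ℕ) :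
    (1 - p) ^ 2 * ∑ m ∈ Finset.range n, ((c + m : ℕ) : ℝ) * p ^ m =
      (c : ℝ) * (1 - p) + p - p ^ n - ((c : ℝ) + (n : ℝ) - 1) * p ^ n * (1 - p) := by
  induction n with
  | zero => simp; ring
  | succ n ih =>
    rw [Finset.sum_range_succ, mul_add, ih]
    push_cast
    ring

private lemma auxL (d k n : ℕ) (hdk : d < k) (hn : n = k - d) (p : ℝ) :
    ∀ j, j ≤ n →
    ((∑ i ∈ Finset.range j, ((k - i + 1 : ℕ) : ℝ) * p ^ (n - i - 1) * (1 - p)) +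
      ((k - j + 1 : ℕ) : ℝ) * p ^ n +
      ∑ i ∈ Finset.Icc (j + 1) n, ((k - i + 1 : ℕ) : ℝ) * p ^ (n - i) * (1 - p)) * (1 - p) =
    1 - p ^ n + (1 - p) * (p ^ (n - j) - (j : ℝ) * p ^ n + (d : ℝ)) := by
  have hk : k = d + n := by omega
  intro j
  induction j with
  | zero =>
    intro _
    have hIcc : ∑ i ∈ Finset.Icc (0 + 1) n, ((k - i + 1 : ℕ) : ℝ) * p ^ (n - i) * (1 - p)
        = ∑ i ∈ Finset.range n, ((d + 1 + i : ℕ) : ℝ) * p ^ i * (1 - p) := by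
      refine Finset.sum_nbij' (fun i => n - i) (fun m => n - m) ?_ ?_ ?_ ?_ ?_
      · intro a ha; simp only [Finset.mem_Icc] at ha; simp only [Finset.mem_range]; omega
      · intro a ha; simp only [Finset.mem_range] at ha; simp only [Finset.mem_Icc]; omega
      · intro a ha; simp only [Finset.mem_Icc] at ha; omega
      · intro a ha; simp only [Finset.mem_range] at ha; omega
      · intro a ha; simp only [Finset.mem_Icc] at ha
        congr 2
        · congr 1
          omega
    rw [hIcc]
    have hs : ∑ i ∈ Finset.range n, ((d + 1 + i : ℕ) : ℝ) * p ^ i * (1 - p)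
        = (∑ m ∈ Finset.range n, ((d + 1 + m : ℕ) : ℝ) * p ^ m) * (1 - p) := by
      rw [Finset.sum_mul]
    rw [hs]
    have hB := sumB (d + 1) p n
    subst hk
    simp only [Finset.range_zero, Finset.sum_empty, Nat.sub_zero, Nat.zero_le,
      Nat.add_sub_cancel_left, Nat.add_sub_cancel]
    push_cast at hB ⊢
    linear_combination hB
  | succ j ih =>
    intro hj1
    have ih' := ih (by omega)
    have hsplit : Finset.Icc (j + 1) n = insert (j + 1) (Finset.Icc (j + 1 + 1) n) := by
      ext x; simp; omega
    rw [hsplit, Finset.sum_insert (by simp)] at ih'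
    rw [Finset.sum_range_succ]
    obtain ⟨e, he⟩ : ∃ e, n = j + 1 + e := ⟨n - (j + 1), by omega⟩
    subst he
    subst hk
    rw [show d + (j + 1 + e) - j + 1 = d + e + 2 from by omega,
      show d + (j + 1 + e) - (j + 1) + 1 = d + e + 1 from by omega,
      show j + 1 + e - (j + 1) = e from by omega] at ih' ⊢
    rw [show j + 1 + e - j - 1 = e from by omega]
    rw [show j + 1 + e - j = e + 1 from by omega] at ih'
    push_cast at ih' ⊢
    linear_combination ih'

/-- Closed form for the average output codeword length `L_out^j` of the symbol sliding
encoder SS(j). -/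
theorem stmt_13 (d k n j : ℕ) (hdk : d < k) (hn : n = k - d) (hj : j ≤ n)
    (p : ℝ) (hp0 : 0 < p) (hp1 : p < 1) :
    (∑ i ∈ Finset.range j, ((k - i + 1 : ℕ) : ℝ) * p ^ (n - i - 1) * (1 - p)) +
      ((k - j + 1 : ℕ) : ℝ) * p ^ n +
      ∑ i ∈ Finset.Icc (j + 1) n, ((k - i + 1 : ℕ) : ℝ) * p ^ (n - i) * (1 - p) =
    (1 - p ^ n + (1 - p) * (p ^ (n - j) - (j : ℝ) * p ^ n + (d : ℝ))) / (1 - p) := by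
  rw [eq_div_iff (by intro h; nlinarith [h] : (1 : ℝ) - p ≠ 0)]
  exact auxL d k n hdk hn p j hj
end

section
/- Let d ≥ 0 be an integer and let λ > 1 be a real number satisfying λ^{-1} + λ^{-(d+1)} = 1. Then h(λ^{-1}) = (1 + d·(1-λ^{-1}))·log₂ λ. (That is, the average rate of the bit stuffing algorithm for the (d,∞) constraint with bias λ^{-1} equals the Shannon capacity log₂ λ.) -/
/-- The average rate of bit stuffing for the `(d,∞)` constraint with bias `lam⁻¹`
equals the Shannon capacity `log₂ lam`. -/
theorem stmt_15 (d : ℕ) (lam : ℝ) (hlam : 1 < lam)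
    (hroot : lam⁻¹ + lam⁻¹ ^ (d + 1) = 1) :
    binEnt lam⁻¹ = (1 + (d : ℝ) * (1 - lam⁻¹)) * Real.logb 2 lam := by
  have h1 : 1 - lam⁻¹ = lam⁻¹ ^ (d + 1) := by linarith
  rw [binEnt, h1, Real.logb_pow, Real.logb_inv]
  rw [← h1]
  push_cast
  ring
end

section
/- Let m ≥ 1 and d ≥ 0 be integers and let λ > 1 be a real number satisfying Σ_{j=d+1}^{d+2^m} λ^{-j} = 1. Then Σ_{i=0}^{m-1} h(1/(1+λ^{-2^i})) = (Σ_{j=1}^{2^m} (d+j)·λ^{-(d+j)})·log₂ λ. (That is, the average information rate of the m-stream interleaving encoder for the (d,d+2^m−1) constraint equals the Shannon capacity log₂ λ, so the interleaving construction with m distribution transformers of biases 1/(1+λ^{-2^i}), 0 ≤ i ≤ m−1, is optimal.) -/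
lemma prod_aux (q : ℝ) (m : ℕ) :
    (1 - q) * ∏ i ∈ Finset.range m, (1 + q ^ (2 ^ i)) = 1 - q ^ (2 ^ m) := by
  induction m with
  | zero => simp
  | succ n ih =>
      rw [Finset.prod_range_succ, ← mul_assoc, ih, pow_succ, pow_mul]
      ring

lemma ratio_aux (q : ℝ) (hq0 : 0 < q) (hq1 : q < 1) (m : ℕ) :
    ∑ i ∈ Finset.range m, (2 ^ i : ℝ) * q ^ (2 ^ i) / (1 + q ^ (2 ^ i)) =
      q / (1 - q) - (2 ^ m : ℝ) * q ^ (2 ^ m) / (1 - q ^ (2 ^ m)) := by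
  induction m with
  | zero => simp
  | succ n ih =>
      rw [Finset.sum_range_succ, ih]
      have ha0 : 0 < q ^ (2 ^ n) := pow_pos hq0 _
      have ha1 : q ^ (2 ^ n) < 1 := pow_lt_one₀ hq0.le hq1 (Nat.two_pow_pos n).ne'
      have e1 : q ^ (2 ^ (n+1)) = (q ^ (2 ^ n)) ^ 2 := by
        rw [pow_succ, pow_mul]
      set a := q ^ (2 ^ n) with ha
      rw [e1]
      have h1 : (1:ℝ) - q ≠ 0 := by linarith
      have h2 : (1:ℝ) - a ≠ 0 := by linarith
      have h3 : (1:ℝ) + a ≠ 0 := by linarith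
      have h4 : (1:ℝ) - a ^ 2 ≠ 0 := by nlinarith
      field_simp
      ring

lemma kq_aux (q : ℝ) (N : ℕ) :
    (1 - q) ^ 2 * ∑ k ∈ Finset.range N, (k : ℝ) * q ^ k =
      q - q ^ N * (N * (1 - q) + q) := by
  induction N with
  | zero => simp
  | succ n ih =>
      rw [Finset.sum_range_succ, mul_add, ih, pow_succ]
      push_cast
      ring

lemma binEnt_aux (x : ℝ) (hx : 0 < x) :
    binEnt (1 / (1 + x)) = Real.logb 2 (1 + x) - x / (1 + x) * Real.logb 2 x := by
  have h1 : (0:ℝ) < 1 + x := by linarith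
  have h1' : (1:ℝ) + x ≠ 0 := ne_of_gt h1
  have h2 : 1 - 1 / (1 + x) = x / (1 + x) := by field_simp; ring
  unfold binEnt
  rw [h2, one_div, Real.logb_inv, Real.logb_div (ne_of_gt hx) h1']
  field_simp
  ring

/-- The average information rate of the `m`-stream interleaving encoder for the
`(d, d+2^m-1)` constraint equals the Shannon capacity `log₂ lam`. -/
theorem stmt_16 (m d : ℕ) (hm : 1 ≤ m) (lam : ℝ) (hlam : 1 < lam)
    (hroot : ∑ j ∈ Finset.Icc (d + 1) (d + 2 ^ m), lam⁻¹ ^ j = 1) :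
    ∑ i ∈ Finset.range m, binEnt (1 / (1 + lam⁻¹ ^ (2 ^ i))) =
      (∑ j ∈ Finset.Icc 1 (2 ^ m), ((d + j : ℕ) : ℝ) * lam⁻¹ ^ (d + j)) *
        Real.logb 2 lam := by
  set q : ℝ := lam⁻¹ with hqdef
  have hlam0 : (0:ℝ) < lam := by linarith
  have hq0 : 0 < q := inv_pos.mpr hlam0
  have hq1 : q < 1 := inv_lt_one_of_one_lt₀ hlam
  set N : ℕ := 2 ^ m with hNdef
  have hA0 : 0 < q ^ N := pow_pos hq0 _
  have hA1 : q ^ N < 1 := pow_lt_one₀ hq0.le hq1 (Nat.two_pow_pos m).ne'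
  have h1q : (1:ℝ) - q ≠ 0 := by linarith
  have h1A : (1:ℝ) - q ^ N ≠ 0 := by linarith
  set G : ℝ := ∑ k ∈ Finset.range N, q ^ k with hGdef
  have hG : (1 - q) * G = 1 - q ^ N := by
    have := geom_sum_mul q N
    rw [hGdef]; linarith [this]
  -- root condition rewritten
  have hroot' : q ^ (d + 1) * G = 1 := by
    have e : ∑ j ∈ Finset.Icc (d + 1) (d + N), q ^ j = q ^ (d + 1) * G := by
      rw [← Finset.Ico_add_one_right_eq_Icc, Finset.sum_Ico_eq_sum_range]
      have hn : d + N + 1 - (d + 1) = N := by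
        rw [Nat.add_right_comm]; exact Nat.add_sub_cancel_left (d+1) N
      rw [hn, hGdef, Finset.mul_sum]
      exact Finset.sum_congr rfl fun k _ => by rw [← pow_add]
    rw [← e]; exact hroot
  have hGlam : G = lam ^ (d + 1) := by
    have h : q ^ (d + 1) * lam ^ (d + 1) = 1 := by
      rw [hqdef, ← mul_pow, inv_mul_cancel₀ (ne_of_gt hlam0), one_pow]
    have hqd : q ^ (d + 1) ≠ 0 := ne_of_gt (pow_pos hq0 _)
    field_simp at hroot' h
    nlinarith [hroot', h, pow_pos hq0 (d+1)]
  have hlogq : Real.logb 2 q = - Real.logb 2 lam := by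
    rw [hqdef, Real.logb_inv]
  -- product identity
  have hprod : ∏ i ∈ Finset.range m, (1 + q ^ (2 ^ i)) = G := by
    have h := prod_aux q m
    rw [← hNdef] at h
    have := hG
    apply mul_left_cancel₀ h1q
    rw [h, hG]
  -- LHS computation
  have hx : ∀ i : ℕ, 0 < q ^ (2 ^ i) := fun i => pow_pos hq0 _
  have hLHS : ∑ i ∈ Finset.range m, binEnt (1 / (1 + q ^ (2 ^ i))) =
      Real.logb 2 lam * ((d + 1 : ℝ) + (q / (1 - q) - (2 ^ m : ℝ) * q ^ N / (1 - q ^ N))) := by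
    have step : ∀ i ∈ Finset.range m, binEnt (1 / (1 + q ^ (2 ^ i))) =
        Real.logb 2 (1 + q ^ (2 ^ i)) -
          Real.logb 2 q * ((2 ^ i : ℝ) * q ^ (2 ^ i) / (1 + q ^ (2 ^ i))) := by
      intro i _
      rw [binEnt_aux _ (hx i), Real.logb_pow]
      push_cast
      ring
    rw [Finset.sum_congr rfl step, Finset.sum_sub_distrib, ← Finset.mul_sum,
      ← Real.logb_prod _ _ (fun i _ => by positivity), hprod, hGlam,
      ratio_aux q hq0 hq1 m, Real.logb_pow, hlogq, ← hNdef]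
    push_cast
    ring
  -- RHS sum computation
  set K : ℝ := ∑ k ∈ Finset.range N, (k : ℝ) * q ^ k with hKdef
  have hRHSsum : ∑ j ∈ Finset.Icc 1 N, ((d + j : ℕ) : ℝ) * q ^ (d + j) =
      (d + 1 : ℝ) + q ^ (d + 1) * K := by
    rw [← Finset.Ico_add_one_right_eq_Icc, Finset.sum_Ico_eq_sum_range]
    have hn : N + 1 - 1 = N := Nat.add_sub_cancel N 1
    rw [hn]
    have e : ∀ k ∈ Finset.range N, ((d + (1 + k) : ℕ) : ℝ) * q ^ (d + (1 + k)) =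
        (d + 1 : ℝ) * (q ^ (d+1) * q ^ k) + q ^ (d + 1) * ((k : ℝ) * q ^ k) := by
      intro k _
      have : d + (1 + k) = (d + 1) + k := by omega
      rw [this, pow_add]
      push_cast
      ring
    rw [Finset.sum_congr rfl e, Finset.sum_add_distrib, ← Finset.mul_sum, ← Finset.mul_sum,
      ← Finset.mul_sum, ← hGdef, ← hKdef, hroot']
    ring
  -- key scalar identity
  have hkey : q ^ (d + 1) * K = q / (1 - q) - (2 ^ m : ℝ) * q ^ N / (1 - q ^ N) := by
    have hcancel : ((1 - q) * (1 - q ^ N)) ≠ 0 := mul_ne_zero h1q h1A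
    apply mul_right_cancel₀ hcancel
    have hk := kq_aux q N
    rw [← hKdef] at hk
    have hq1A : q ^ (d + 1) * (1 - q ^ N) = 1 - q := by
      calc q ^ (d + 1) * (1 - q ^ N) = (1 - q) * (q ^ (d+1) * G) := by rw [← hG]; ring
        _ = 1 - q := by rw [hroot']; ring
    have hN2 : ((2:ℝ) ^ m) = (N : ℝ) := by rw [hNdef]; push_cast; ring
    rw [hN2]
    have hL : q ^ (d + 1) * K * ((1 - q) * (1 - q ^ N)) = (1 - q) ^ 2 * K := by
      linear_combination K * (1 - q) * hq1A
    have hR : (q / (1 - q) - (N : ℝ) * q ^ N / (1 - q ^ N)) * ((1 - q) * (1 - q ^ N)) =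
        q * (1 - q ^ N) - (N : ℝ) * q ^ N * (1 - q) := by
      field_simp
    rw [hL, hR]
    linear_combination hk
  rw [hLHS, hRHSsum, hkey]
  ring
end

section
/- Let m ≥ 1 be an integer and let x be a real number with 0 < x < 1. Then Σ_{j=1}^{2^m-1} j·x^j = (Π_{i=0}^{m-1} (1 + x^{2^i})) · (Σ_{i=0}^{m-1} 2^i·x^{2^i}/(1 + x^{2^i})). -/
lemma geom_prod_aux (x : ℝ) : ∀ m : ℕ,
    ∑ j ∈ Finset.range (2 ^ m), x ^ j = ∏ i ∈ Finset.range m, (1 + x ^ (2 ^ i)) := by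
  intro m
  induction m with
  | zero => simp
  | succ n ih =>
    rw [Finset.prod_range_succ, ← ih, pow_succ, mul_two, Finset.sum_range_add]
    have : ∀ j ∈ Finset.range (2 ^ n), x ^ (2 ^ n + j) = x ^ (2 ^ n) * x ^ j := by
      intro j _; rw [pow_add]
    rw [Finset.sum_congr rfl this, ← Finset.mul_sum]
    ring

lemma key_aux (x : ℝ) (hx : ∀ N : ℕ, (1 : ℝ) + x ^ N ≠ 0) : ∀ m : ℕ,
    ∑ j ∈ Finset.range (2 ^ m), (j : ℝ) * x ^ j =
      (∏ i ∈ Finset.range m, (1 + x ^ (2 ^ i))) *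
        ∑ i ∈ Finset.range m, (2 ^ i : ℝ) * x ^ (2 ^ i) / (1 + x ^ (2 ^ i)) := by
  intro m
  induction m with
  | zero => simp
  | succ n ih =>
    have hN : (1 : ℝ) + x ^ (2 ^ n) ≠ 0 := hx _
    rw [Finset.prod_range_succ, Finset.sum_range_succ (f := fun i =>
        (2 ^ i : ℝ) * x ^ (2 ^ i) / (1 + x ^ (2 ^ i))), pow_succ, mul_two,
      Finset.sum_range_add]
    have h1 : ∀ j ∈ Finset.range (2 ^ n),
        ((2 ^ n + j : ℕ) : ℝ) * x ^ (2 ^ n + j)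
          = x ^ (2 ^ n) * ((2 ^ n : ℝ) * x ^ j + (j : ℝ) * x ^ j) := by
      intro j _
      push_cast
      rw [pow_add]
      ring
    rw [Finset.sum_congr rfl h1, ← Finset.mul_sum, Finset.sum_add_distrib,
      ← Finset.mul_sum, geom_prod_aux, ih]
    field_simp
    ring

/-- Key identity in the proof that the `m`-stream interleaving construction achieves
the capacity of the `(d, d+2^m-1)` constraint. -/
theorem stmt_19 (m : ℕ) (hm : 1 ≤ m) (x : ℝ) (hx0 : 0 < x) (hx1 : x < 1) :
    ∑ j ∈ Finset.Icc 1 (2 ^ m - 1 : ℕ), (j : ℝ) * x ^ j =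
      (∏ i ∈ Finset.range m, (1 + x ^ (2 ^ i))) *
        ∑ i ∈ Finset.range m, (2 ^ i : ℝ) * x ^ (2 ^ i) / (1 + x ^ (2 ^ i)) := by
  have hx : ∀ N : ℕ, (1 : ℝ) + x ^ N ≠ 0 := fun N => by positivity
  rw [← key_aux x hx m]
  have hpos : 0 < 2 ^ m := Nat.pow_pos (by norm_num)
  have hset : Finset.Icc 1 (2 ^ m - 1) = Finset.Ico 1 (2 ^ m) := by
    rw [← Finset.Ico_add_one_right_eq_Icc]; congr 1; omega
  rw [hset, Finset.range_eq_Ico, Finset.sum_eq_sum_Ico_succ_bot hpos]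
  simp
end
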